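/- Suppose Σ contains two distinct events. Then for every n ≥ 1 there exist healthy sets T and T' of availability traces such that T ∩ Obs_{n−1} = T' ∩ Obs_{n−1} but T ∩ Obs_n ≠ T' ∩ Obs_n. (Hence the model A_n, which records at most n offers between consecutive ordinary events, strictly refines A_{n−1}.) -/

import Mathlib

/-- An availability action over the alphabet `E`: `Sum.inl a` is an ordinary event `a ∈ Σ`,
and `Sum.inr a` is the offer `◎a` of the event `a ∈ Σ`. -/
abbrev Act (E : Type*) := E ⊕ E

variable {E : Type*}

/-- A set `T` of availability traces is healthy (a member of the Availability Traces Model):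
(1) nonempty and prefix-closed; (2) offers can be duplicated or removed; (3) an offered
event can be performed; (4) a performed event can first be offered. -/
def Healthy (T : Set (List (Act E))) : Prop :=
  T.Nonempty ∧
  (∀ s t : List (Act E), s ++ t ∈ T → s ∈ T) ∧
  (∀ (tr : List (Act E)) (a : E) (tr' : List (Act E)),
    tr ++ [Sum.inr a] ++ tr' ∈ T →
      tr ++ [Sum.inr a, Sum.inr a] ++ tr' ∈ T ∧ tr ++ tr' ∈ T) ∧
  (∀ (tr : List (Act E)) (a : E), tr ++ [Sum.inr a] ∈ T → tr ++ [Sum.inl a] ∈ T) ∧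
  (∀ (tr : List (Act E)) (a : E) (tr' : List (Act E)),
    tr ++ [Sum.inl a] ++ tr' ∈ T → tr ++ [Sum.inr a, Sum.inl a] ++ tr' ∈ T)

/-- `Obs m`: availability traces in which every block of consecutive offer actions has
length at most `m`. -/
def Obs (m : ℕ) : Set (List (Act E)) :=
  {tr | ∀ s u t : List (Act E), tr = s ++ u ++ t →
    (∀ x ∈ u, ∃ a : E, x = Sum.inr a) → u.length ≤ m}

namespace ObsAux

/-- Number of letter changes in `x :: v`. -/
def chg : Bool → List Bool → ℕ
  | _, [] => 0
  | x, y :: l => (if x = y then 0 else 1) + chg y l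

lemma chg_le_length (x : Bool) (v : List Bool) : chg x v ≤ v.length := by
  induction v generalizing x with
  | nil => simp [chg]
  | cons y l ih =>
    simp only [chg, List.length_cons]
    have := ih y
    split <;> omega

lemma chg_append (x : Bool) (u v : List Bool) :
    chg x (u ++ v) = chg x u + chg (u.getLastD x) v := by
  induction u generalizing x with
  | nil => simp [chg]
  | cons y u ih =>
    show (if x = y then 0 else 1) + chg y (u ++ v) =
      (if x = y then 0 else 1) + chg y u + chg ((y :: u).getLastD x) v
    rw [ih y, List.getLastD_cons, Nat.add_assoc]

lemma chg_le_cons : ∀ (y c : Bool) (v : List Bool), chg y v ≤ chg y (c :: v)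
  | y, c, [] => by simp [chg]
  | y, c, z :: l => by cases y <;> cases c <;> cases z <;> simp [chg] <;> omega

lemma chg_delete (x c : Bool) (u v : List Bool) :
    chg x (u ++ v) ≤ chg x (u ++ c :: v) := by
  rw [chg_append, chg_append]
  exact Nat.add_le_add_left (chg_le_cons _ c v) _

lemma chg_dup (x c : Bool) (u v : List Bool) :
    chg x (u ++ c :: c :: v) = chg x (u ++ c :: v) := by
  rw [chg_append, chg_append]
  congr 1
  simp [chg]

lemma chg_prefix (x : Bool) (u v : List Bool) : chg x u ≤ chg x (u ++ v) := by
  rw [chg_append]; exact Nat.le_add_right _ _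

/-- Alternating word of length `k` starting with `x`. -/
def altL : ℕ → Bool → List Bool
  | 0, _ => []
  | k+1, x => x :: altL k (!x)

def altEnd : ℕ → Bool → Bool
  | 0, x => x
  | k+1, x => altEnd k (!x)

lemma altL_concat : ∀ (k : ℕ) (x : Bool), altL (k+1) x = altL k x ++ [altEnd k x]
  | 0, x => rfl
  | k+1, x => by
    show x :: altL (k+1) (!x) = (x :: altL k (!x)) ++ [altEnd (k+1) x]
    rw [altL_concat k (!x)]
    rfl

lemma length_altL : ∀ (k : ℕ) (x : Bool), (altL k x).length = k
  | 0, _ => rfl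
  | k+1, x => by simp [altL, length_altL k (!x)]

lemma chg_altL : ∀ (k : ℕ) (x : Bool), chg (!x) (altL k x) = k
  | 0, _ => rfl
  | k+1, x => by
    have h := chg_altL k (!x)
    rw [Bool.not_not] at h
    cases x <;> simp [altL, chg] at h ⊢ <;> omega

variable (a b : E)

def emb : Bool → E := fun x => bif x then b else a

def Off (v : List Bool) : List (Act E) := v.map fun x => Sum.inr (emb a b x)

/-- The healthy set parameterized by the alternation bound `s`. -/
def TT (s : ℕ) : Set (List (Act E)) :=
  {t | ∃ v : List Bool, chg false v ≤ s ∧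
    (t = Off a b v ∨ ∃ u x, v = u ++ [x] ∧ t = Off a b u ++ [Sum.inl (emb a b x)])}

lemma inl_not_mem_off (c : E) (v : List Bool) : Sum.inl c ∉ Off a b v := by
  simp [Off]

lemma eq_off_split {l₁ l₂ : List (Act E)} {v : List Bool} (h : l₁ ++ l₂ = Off a b v) :
    ∃ v₁ v₂, v = v₁ ++ v₂ ∧ l₁ = Off a b v₁ ∧ l₂ = Off a b v₂ := by
  obtain ⟨v₁, v₂, rfl, h₁, h₂⟩ := List.map_eq_append_iff.mp h.symm
  exact ⟨v₁, v₂, rfl, h₁.symm, h₂.symm⟩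

lemma eq_off_cons {y : Act E} {l₁ l₂ : List (Act E)} {v : List Bool}
    (h : l₁ ++ y :: l₂ = Off a b v) :
    ∃ v₁ x v₂, v = v₁ ++ x :: v₂ ∧ l₁ = Off a b v₁ ∧ y = Sum.inr (emb a b x) ∧
      l₂ = Off a b v₂ := by
  obtain ⟨v₁, v₂, rfl, h₁, h₂⟩ := eq_off_split a b h
  obtain ⟨x, v₂', rfl, hx, hl⟩ := List.map_eq_cons_iff.mp h₂.symm
  exact ⟨v₁, x, v₂', rfl, h₁, hx.symm, hl.symm⟩

lemma healthy_TT (s : ℕ) : Healthy (TT a b s) := by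
  refine ⟨⟨[], [], by simp [chg], Or.inl rfl⟩, ?_, ?_, ?_, ?_⟩
  · -- prefix closed
    rintro l t ⟨v, hv, h | ⟨u, x, rfl, h⟩⟩
    · obtain ⟨v₁, v₂, rfl, h₁, h₂⟩ := eq_off_split a b h
      exact ⟨v₁, (chg_prefix false v₁ v₂).trans hv, Or.inl h₁⟩
    · rcases List.eq_nil_or_concat t with rfl | ⟨t₀, y, rfl⟩
      · rw [List.append_nil] at h
        exact ⟨u ++ [x], hv, Or.inr ⟨u, x, rfl, h⟩⟩
      · rw [List.concat_eq_append, ← List.append_assoc] at h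
        obtain ⟨h', hy⟩ := List.append_inj' h (by simp)
        obtain ⟨v₁, v₂, rfl, h₁, h₂⟩ := eq_off_split a b h'
        exact ⟨v₁, le_trans (le_trans (chg_prefix false v₁ v₂)
          (chg_prefix false (v₁ ++ v₂) [x])) hv, Or.inl h₁⟩
  · -- offers can be duplicated / removed
    rintro tr c tr' ⟨v, hv, h | ⟨u, x, rfl, h⟩⟩
    · rw [List.append_assoc, List.singleton_append] at h
      obtain ⟨p, xc, q, rfl, rfl, hc, rfl⟩ := eq_off_cons a b h
      obtain rfl := Sum.inr.inj hc
      constructor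
      · refine ⟨p ++ xc :: xc :: q, ?_, Or.inl (by simp [Off])⟩
        rw [chg_dup]; exact hv
      · exact ⟨p ++ q, le_trans (chg_delete false xc p q) hv, Or.inl (by simp [Off])⟩
    · rcases List.eq_nil_or_concat tr' with rfl | ⟨q₀, y, rfl⟩
      · rw [List.append_nil] at h
        obtain ⟨_, hy⟩ := List.append_inj' h (by simp)
        simp at hy
      · rw [List.concat_eq_append]
        have h0 : (tr ++ Sum.inr c :: q₀) ++ [y] = Off a b u ++ [Sum.inl (emb a b x)] := by
          simpa using h
        obtain ⟨h', hy⟩ := List.append_inj' h0 (by simp)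
        obtain rfl : y = Sum.inl (emb a b x) := by simpa using hy
        obtain ⟨p, xc, q, rfl, rfl, hc, rfl⟩ := eq_off_cons a b h'
        obtain rfl := Sum.inr.inj hc
        constructor
        · refine ⟨(p ++ xc :: xc :: q) ++ [x], ?_,
            Or.inr ⟨p ++ xc :: xc :: q, x, rfl, by simp [Off]⟩⟩
          calc chg false ((p ++ xc :: xc :: q) ++ [x])
              = chg false (p ++ xc :: xc :: (q ++ [x])) := by simp
            _ = chg false (p ++ xc :: (q ++ [x])) := chg_dup _ _ _ _
            _ = chg false ((p ++ xc :: q) ++ [x]) := by simp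
            _ ≤ s := hv
        · refine ⟨(p ++ q) ++ [x], ?_,
            Or.inr ⟨p ++ q, x, rfl, by simp [Off]⟩⟩
          calc chg false ((p ++ q) ++ [x])
              = chg false (p ++ (q ++ [x])) := by simp
            _ ≤ chg false (p ++ xc :: (q ++ [x])) := chg_delete _ _ _ _
            _ = chg false ((p ++ xc :: q) ++ [x]) := by simp
            _ ≤ s := hv
  · -- an offered event can be performed
    rintro tr c ⟨v, hv, h | ⟨u, x, rfl, h⟩⟩
    · have h' : tr ++ Sum.inr c :: [] = Off a b v := by simpa using h
      obtain ⟨p, xc, q, rfl, rfl, hc, hq⟩ := eq_off_cons a b h'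
      obtain rfl := Sum.inr.inj hc
      obtain rfl : q = [] := by simpa [Off] using hq.symm
      exact ⟨p ++ [xc], hv, Or.inr ⟨p, xc, rfl, rfl⟩⟩
    · obtain ⟨_, hy⟩ := List.append_inj' h (by simp)
      simp at hy
  · -- a performed event can first be offered
    rintro tr c tr' ⟨v, hv, h | ⟨u, x, rfl, h⟩⟩
    · exfalso
      have hm : (Sum.inl c : Act E) ∈ tr ++ [Sum.inl c] ++ tr' := by simp
      rw [h] at hm
      exact inl_not_mem_off a b c v hm
    · rcases List.eq_nil_or_concat tr' with rfl | ⟨q₀, y, rfl⟩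
      · rw [List.append_nil] at h ⊢
        obtain ⟨h', hy⟩ := List.append_inj' h (by simp)
        obtain rfl : c = emb a b x := by simpa using hy
        refine ⟨(u ++ [x]) ++ [x], ?_, Or.inr ⟨u ++ [x], x, rfl, by simp [Off, h']⟩⟩
        calc chg false ((u ++ [x]) ++ [x])
            = chg false (u ++ x :: x :: []) := by simp
          _ = chg false (u ++ x :: []) := chg_dup _ _ _ _
          _ ≤ s := by simpa using hv
      · exfalso
        have h0 : (tr ++ Sum.inl c :: q₀) ++ [y] = Off a b u ++ [Sum.inl (emb a b x)] := by
          simpa using h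
        obtain ⟨h', _⟩ := List.append_inj' h0 (by simp)
        have hm : (Sum.inl c : Act E) ∈ tr ++ Sum.inl c :: q₀ := by simp
        rw [h'] at hm
        exact inl_not_mem_off a b c u hm

lemma emb_inj (hab : a ≠ b) : Function.Injective (emb a b) := by
  intro x y h
  cases x <;> cases y <;> simp_all [emb]

end ObsAux

open ObsAux in
/-- If `Σ` contains two distinct events then, for every `n ≥ 1`, the model `A_n` (recording
at most `n` offers between consecutive ordinary events) strictly refines `A_{n-1}`: there
are healthy sets agreeing on `Obs (n-1)` but differing on `Obs n`. -/
theorem obs_hierarchy_strict {E : Type*} (a b : E) (hab : a ≠ b) (n : ℕ) (hn : 1 ≤ n) :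
    ∃ T T' : Set (List (Act E)), Healthy T ∧ Healthy T' ∧
      T ∩ Obs (n - 1) = T' ∩ Obs (n - 1) ∧ T ∩ Obs n ≠ T' ∩ Obs n := by
  refine ⟨TT a b n, TT a b (n+1), healthy_TT a b n, healthy_TT a b (n+1), ?_, ?_⟩
  · -- agreement on Obs (n-1)
    ext t
    constructor
    · rintro ⟨⟨v, hv, hc⟩, ho⟩
      exact ⟨⟨v, hv.trans (Nat.le_succ n), hc⟩, ho⟩
    · rintro ⟨⟨v, hv, hc⟩, ho⟩
      by_cases hvn : chg false v ≤ n
      · exact ⟨⟨v, hvn, hc⟩, ho⟩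
      exfalso
      have hlen : n + 1 ≤ v.length := by
        have := chg_le_length false v
        omega
      rcases hc with rfl | ⟨u, x, rfl, rfl⟩
      · have h1 : (Off a b v).length ≤ n - 1 := by
          refine ho [] (Off a b v) [] (by simp) ?_
          intro y hy
          simp only [Off, List.mem_map] at hy
          obtain ⟨z, _, rfl⟩ := hy
          exact ⟨_, rfl⟩
        have h2 : (Off a b v).length = v.length := by simp [Off]
        omega
      · have h1 : (Off a b u).length ≤ n - 1 := by
          refine ho [] (Off a b u) [Sum.inl (emb a b x)] (by simp) ?_
          intro y hy
          simp only [Off, List.mem_map] at hy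
          obtain ⟨z, _, rfl⟩ := hy
          exact ⟨_, rfl⟩
        have h2 : (Off a b u).length = u.length := by simp [Off]
        have h3 : (u ++ [x]).length = u.length + 1 := by simp
        omega
  · -- difference on Obs n
    intro heq
    set τ : List (Act E) := Off a b (altL n true) ++ [Sum.inl (emb a b (altEnd n true))] with hτ
    have hchg : chg false (altL n true ++ [altEnd n true]) = n + 1 := by
      rw [← altL_concat]
      simpa using chg_altL (n+1) true
    have hmem' : τ ∈ TT a b (n+1) :=
      ⟨altL n true ++ [altEnd n true], le_of_eq hchg,
        Or.inr ⟨altL n true, altEnd n true, rfl, rfl⟩⟩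
    have hτlen : τ.length = n + 1 := by simp [hτ, Off, length_altL]
    have hobs : τ ∈ Obs n := by
      intro s u t h hall
      by_contra hu
      push_neg at hu
      have hlen : s.length + u.length + t.length = n + 1 := by
        have := congrArg List.length h
        simp at this
        omega
      have hs : s = [] := List.eq_nil_of_length_eq_zero (by omega)
      have ht : t = [] := List.eq_nil_of_length_eq_zero (by omega)
      subst hs ht
      simp only [List.nil_append, List.append_nil] at h
      have hm : (Sum.inl (emb a b (altEnd n true)) : Act E) ∈ u := by
        rw [← h, hτ]; simp
      obtain ⟨c, hc⟩ := hall _ hm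
      cases hc
    have hmem : τ ∈ TT a b n := by
      have : τ ∈ TT a b (n+1) ∩ Obs n := ⟨hmem', hobs⟩
      rw [← heq] at this
      exact this.1
    obtain ⟨v, hv, hc | ⟨u, x, rfl, h⟩⟩ := hmem
    · have hm : (Sum.inl (emb a b (altEnd n true)) : Act E) ∈ τ := by simp [hτ]
      rw [hc] at hm
      exact inl_not_mem_off a b _ v hm
    · rw [hτ] at h
      obtain ⟨h1, h2⟩ := List.append_inj' h (by simp)
      obtain rfl : x = altEnd n true := (emb_inj a b hab (by simpa using h2)).symm
      have hinj : Function.Injective (fun x : Bool => (Sum.inr (emb a b x) : Act E)) := by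
        intro y z hyz
        exact emb_inj a b hab (Sum.inr.inj hyz)
      obtain rfl : u = altL n true := List.map_injective_iff.mpr hinj h1.symm
      omega
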